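/- arXiv:2305.00072 — 5 statements merged into one kernel-verified Lean document; each statement's English description precedes it below -/
import Mathlib

section
/- Let (w₁, w₂) be a classical solution of system (W) on ℝ × [0,T] and let a < b be real numbers. Then the function t ↦ ∫ₐᵇ (w₁²(x,t) + w₂²(x,t)) dx is differentiable on (0,T) with derivative equal to w₁²(b,t) − w₁²(a,t) − w₂²(b,t) + w₂²(a,t). -/
open Real Set Filter MeasureTheory

/-- The nonlinear coefficient `N(u,v) = N₀(√(u² + v²))`. -/
noncomputable def Ncoef (N₀ : ℝ → ℝ) (u v : ℝ) : ℝ :=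
  N₀ (Real.sqrt (u ^ 2 + v ^ 2))

/-- `(w₁, w₂)` is a classical solution of system (W),
`∂ₜw₁ = ∂ₓw₁ − N(w₁,w₂)·w₂`, `∂ₜw₂ = −∂ₓw₂ + N(w₁,w₂)·w₁`, on `ℝ × [0, T]`:
a pair of `C¹` functions satisfying the equations pointwise. -/
def IsSolW (N₀ : ℝ → ℝ) (T : ℝ) (w₁ w₂ : ℝ → ℝ → ℝ) : Prop :=
  ContDiffOn ℝ 1 (fun p : ℝ × ℝ => w₁ p.1 p.2) (Set.univ ×ˢ Set.Icc 0 T) ∧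
  ContDiffOn ℝ 1 (fun p : ℝ × ℝ => w₂ p.1 p.2) (Set.univ ×ˢ Set.Icc 0 T) ∧
  ∀ x : ℝ, ∀ t ∈ Set.Icc (0 : ℝ) T,
    deriv (fun s => w₁ x s) t
        = deriv (fun y => w₁ y t) x - Ncoef N₀ (w₁ x t) (w₂ x t) * w₂ x t ∧
    deriv (fun s => w₂ x s) t
        = - deriv (fun y => w₂ y t) x + Ncoef N₀ (w₁ x t) (w₂ x t) * w₁ x t

private lemma hasDerivAt_snd_slice {f : ℝ × ℝ → ℝ} {U : Set (ℝ × ℝ)} (hU : IsOpen U)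
    (hf : ContDiffOn ℝ 1 f U) {x t : ℝ} (hp : (x, t) ∈ U) :
    HasDerivAt (fun s => f (x, s)) (fderiv ℝ f (x, t) (0, 1)) t := by
  have hd : DifferentiableAt ℝ f (x, t) :=
    (hf.differentiableOn one_ne_zero).differentiableAt (hU.mem_nhds hp)
  have hcurve : HasDerivAt (fun s : ℝ => ((x : ℝ), s)) ((0 : ℝ), (1 : ℝ)) t :=
    (hasDerivAt_const t x).prodMk (hasDerivAt_id t)
  simpa [Function.comp_def] using hd.hasFDerivAt.comp_hasDerivAt t hcurve

private lemma hasDerivAt_fst_slice {f : ℝ × ℝ → ℝ} {U : Set (ℝ × ℝ)} (hU : IsOpen U)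
    (hf : ContDiffOn ℝ 1 f U) {x t : ℝ} (hp : (x, t) ∈ U) :
    HasDerivAt (fun y => f (y, t)) (fderiv ℝ f (x, t) (1, 0)) x := by
  have hd : DifferentiableAt ℝ f (x, t) :=
    (hf.differentiableOn one_ne_zero).differentiableAt (hU.mem_nhds hp)
  have hcurve : HasDerivAt (fun y : ℝ => (y, (t : ℝ))) ((1 : ℝ), (0 : ℝ)) x :=
    (hasDerivAt_id x).prodMk (hasDerivAt_const x t)
  simpa [Function.comp_def] using hd.hasFDerivAt.comp_hasDerivAt x hcurve

/-- for a classical solution of system (W) and `a < b`,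
the map `t ↦ ∫ₐᵇ (w₁² + w₂²) dx` is differentiable on `(0,T)` with derivative
`w₁²(b,t) − w₁²(a,t) − w₂²(b,t) + w₂²(a,t)`. -/
theorem stmt3 (N₀ : ℝ → ℝ) (T : ℝ) (w₁ w₂ : ℝ → ℝ → ℝ)
    (h : IsSolW N₀ T w₁ w₂) (a b : ℝ) (hab : a < b) :
    ∀ t ∈ Set.Ioo (0 : ℝ) T,
      HasDerivAt (fun s => ∫ x in a..b, (w₁ x s ^ 2 + w₂ x s ^ 2))
        (w₁ b t ^ 2 - w₁ a t ^ 2 - w₂ b t ^ 2 + w₂ a t ^ 2) t := by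
  obtain ⟨h1, h2, hpde⟩ := h
  intro t ht
  set f₁ : ℝ × ℝ → ℝ := fun p => w₁ p.1 p.2 with hf₁def
  set f₂ : ℝ × ℝ → ℝ := fun p => w₂ p.1 p.2 with hf₂def
  set U : Set (ℝ × ℝ) := Set.univ ×ˢ Set.Ioo 0 T with hUdef
  have hU : IsOpen U := isOpen_univ.prod isOpen_Ioo
  have hsub : U ⊆ Set.univ ×ˢ Set.Icc 0 T :=
    Set.prod_mono subset_rfl Set.Ioo_subset_Icc_self
  have h1' : ContDiffOn ℝ 1 f₁ U := h1.mono hsub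
  have h2' : ContDiffOn ℝ 1 f₂ U := h2.mono hsub
  have hmemU : ∀ {x s : ℝ}, s ∈ Set.Ioo (0:ℝ) T → (x, s) ∈ U := by
    intro x s hs; exact ⟨Set.mem_univ _, hs⟩
  have hfd1 : ContinuousOn (fun p => fderiv ℝ f₁ p) U :=
    h1'.continuousOn_fderiv_of_isOpen hU le_rfl
  have hfd2 : ContinuousOn (fun p => fderiv ℝ f₂ p) U :=
    h2'.continuousOn_fderiv_of_isOpen hU le_rfl
  set g : ℝ × ℝ → ℝ := fun p =>
    2 * f₁ p * (fderiv ℝ f₁ p (0, 1)) + 2 * f₂ p * (fderiv ℝ f₂ p (0, 1)) with hgdef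
  have hg : ContinuousOn g U := by
    apply ContinuousOn.add
    · exact ((continuousOn_const.mul (h1'.continuousOn)).mul
        (hfd1.clm_apply continuousOn_const))
    · exact ((continuousOn_const.mul (h2'.continuousOn)).mul
        (hfd2.clm_apply continuousOn_const))
  have hkey : ∀ x : ℝ, ∀ s ∈ Set.Ioo (0:ℝ) T,
      HasDerivAt (fun s => w₁ x s ^ 2 + w₂ x s ^ 2) (g (x, s)) s := by
    intro x s hs
    have hw1 : HasDerivAt (fun s => w₁ x s) (fderiv ℝ f₁ (x, s) (0, 1)) s :=
      hasDerivAt_snd_slice hU h1' (hmemU hs)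
    have hw2 : HasDerivAt (fun s => w₂ x s) (fderiv ℝ f₂ (x, s) (0, 1)) s :=
      hasDerivAt_snd_slice hU h2' (hmemU hs)
    have := (hw1.pow 2).add (hw2.pow 2)
    refine this.congr_deriv ?_
    simp only [hgdef, hf₁def, hf₂def, Nat.cast_ofNat, pow_one]
    ring
  obtain ⟨ε, hε0, hball⟩ :=
    (Metric.nhds_basis_closedBall.mem_iff).mp (isOpen_Ioo.mem_nhds ht)
  set K : Set (ℝ × ℝ) := Set.uIcc a b ×ˢ Metric.closedBall t ε with hKdef
  have hKU : K ⊆ U := by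
    rintro ⟨x, s⟩ ⟨hx, hsb⟩
    exact ⟨Set.mem_univ _, hball hsb⟩
  have hKc : IsCompact K := (isCompact_uIcc).prod (isCompact_closedBall t ε)
  obtain ⟨C, hC⟩ := hKc.exists_bound_of_continuousOn (hg.mono hKU)
  have hslice1 : ∀ s ∈ Set.Icc (0:ℝ) T, Continuous (fun x => w₁ x s) := by
    intro s hs
    have : ContinuousOn (fun x : ℝ => f₁ (x, s)) Set.univ := by
      apply h1.continuousOn.comp (Continuous.continuousOn (continuous_id.prodMk continuous_const))
      intro x _; exact ⟨Set.mem_univ _, hs⟩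
    exact continuousOn_univ.mp this
  have hslice2 : ∀ s ∈ Set.Icc (0:ℝ) T, Continuous (fun x => w₂ x s) := by
    intro s hs
    have : ContinuousOn (fun x : ℝ => f₂ (x, s)) Set.univ := by
      apply h2.continuousOn.comp (Continuous.continuousOn (continuous_id.prodMk continuous_const))
      intro x _; exact ⟨Set.mem_univ _, hs⟩
    exact continuousOn_univ.mp this
  have hgslice : Continuous (fun x => g (x, t)) := by
    have : ContinuousOn (fun x : ℝ => g (x, t)) Set.univ := by
      apply hg.comp (Continuous.continuousOn (continuous_id.prodMk continuous_const))
      intro x _; exact hmemU ht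
    exact continuousOn_univ.mp this
  have hmain : HasDerivAt (fun s => ∫ x in a..b, (w₁ x s ^ 2 + w₂ x s ^ 2))
      (∫ x in a..b, g (x, t)) t := by
    refine (intervalIntegral.hasDerivAt_integral_of_dominated_loc_of_deriv_le (Metric.ball_mem_nhds t hε0)
      (F := fun s x => w₁ x s ^ 2 + w₂ x s ^ 2) (F' := fun s x => g (x, s))
      (bound := fun _ => C) ?_ ?_ ?_ ?_ ?_ ?_).2
    · filter_upwards [isOpen_Ioo.eventually_mem ht] with s hs
      exact (((hslice1 s (Set.Ioo_subset_Icc_self hs)).pow 2).add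
        ((hslice2 s (Set.Ioo_subset_Icc_self hs)).pow 2)).aestronglyMeasurable
    · exact (((hslice1 t (Set.Ioo_subset_Icc_self ht)).pow 2).add
        ((hslice2 t (Set.Ioo_subset_Icc_self ht)).pow 2)).intervalIntegrable a b
    · exact hgslice.aestronglyMeasurable
    · filter_upwards with x hx s hs
      exact hC (x, s) ⟨Set.Ioc_subset_Icc_self hx, Metric.ball_subset_closedBall hs⟩
    · exact intervalIntegrable_const
    · filter_upwards with x hx s hs
      exact hkey x s (hball (Metric.ball_subset_closedBall hs))
  have hEq : ∀ x : ℝ, g (x, t) =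
      2 * w₁ x t * (fderiv ℝ f₁ (x, t) (1, 0)) - 2 * w₂ x t * (fderiv ℝ f₂ (x, t) (1, 0)) := by
    intro x
    have ht1 : deriv (fun s => w₁ x s) t = fderiv ℝ f₁ (x, t) (0, 1) :=
      (hasDerivAt_snd_slice hU h1' (hmemU ht)).deriv
    have ht2 : deriv (fun s => w₂ x s) t = fderiv ℝ f₂ (x, t) (0, 1) :=
      (hasDerivAt_snd_slice hU h2' (hmemU ht)).deriv
    have hx1 : deriv (fun y => w₁ y t) x = fderiv ℝ f₁ (x, t) (1, 0) :=
      (hasDerivAt_fst_slice hU h1' (hmemU ht)).deriv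
    have hx2 : deriv (fun y => w₂ y t) x = fderiv ℝ f₂ (x, t) (1, 0) :=
      (hasDerivAt_fst_slice hU h2' (hmemU ht)).deriv
    obtain ⟨e1, e2⟩ := hpde x t (Set.Ioo_subset_Icc_self ht)
    have g1 : g (x, t) = 2 * w₁ x t * deriv (fun s => w₁ x s) t
        + 2 * w₂ x t * deriv (fun s => w₂ x s) t := by
      simp only [hgdef, hf₁def, hf₂def, ht1, ht2]
    rw [g1, e1, e2, hx1, hx2]; ring
  have hFTC : (∫ x in a..b, g (x, t))
      = w₁ b t ^ 2 - w₁ a t ^ 2 - w₂ b t ^ 2 + w₂ a t ^ 2 := by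
    have hder : ∀ x ∈ Set.uIcc a b,
        HasDerivAt (fun y => w₁ y t ^ 2 - w₂ y t ^ 2) (g (x, t)) x := by
      intro x _
      have hw1 : HasDerivAt (fun y => w₁ y t) (fderiv ℝ f₁ (x, t) (1, 0)) x :=
        hasDerivAt_fst_slice hU h1' (hmemU ht)
      have hw2 : HasDerivAt (fun y => w₂ y t) (fderiv ℝ f₂ (x, t) (1, 0)) x :=
        hasDerivAt_fst_slice hU h2' (hmemU ht)
      have := (hw1.pow 2).sub (hw2.pow 2)
      rw [hEq x]
      refine this.congr_deriv ?_
      simp only [Nat.cast_ofNat, pow_one]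
      ring
    have hint : IntervalIntegrable (fun x => g (x, t)) volume a b :=
      hgslice.intervalIntegrable a b
    rw [intervalIntegral.integral_eq_sub_of_hasDerivAt hder hint]
    ring
  rw [hFTC] at hmain
  exact hmain
end

section
/- Let (b₁, b₂) be a classical solution of system (B) on ℝ × [0,T] and let a < b be real numbers. Then the function t ↦ ∫ₐᵇ (b₁²(x,t) + b₂²(x,t)) dx is differentiable on (0,T) with derivative equal to 2·b₁(b,t)·b₂(b,t) − 2·b₁(a,t)·b₂(a,t). -/
open Real Set Filter MeasureTheory

/-- `(b₁, b₂)` is a classical solution of system (B),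
`∂ₜb₁ = ∂ₓb₂ + N₀(√(b₁²+b₂²))·b₂`, `∂ₜb₂ = ∂ₓb₁ − N₀(√(b₁²+b₂²))·b₁`, on `ℝ × [0, T]`:
a pair of `C¹` functions satisfying the equations pointwise. -/
def IsSolB (N₀ : ℝ → ℝ) (T : ℝ) (b₁ b₂ : ℝ → ℝ → ℝ) : Prop :=
  ContDiffOn ℝ 1 (fun p : ℝ × ℝ => b₁ p.1 p.2) (Set.univ ×ˢ Set.Icc 0 T) ∧
  ContDiffOn ℝ 1 (fun p : ℝ × ℝ => b₂ p.1 p.2) (Set.univ ×ˢ Set.Icc 0 T) ∧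
  ∀ x : ℝ, ∀ t ∈ Set.Icc (0 : ℝ) T,
    deriv (fun s => b₁ x s) t
        = deriv (fun y => b₂ y t) x + Ncoef N₀ (b₁ x t) (b₂ x t) * b₂ x t ∧
    deriv (fun s => b₂ x s) t
        = deriv (fun y => b₁ y t) x - Ncoef N₀ (b₁ x t) (b₂ x t) * b₁ x t

section Aux
variable {T : ℝ} {f : ℝ → ℝ → ℝ}

lemma aux_contDiffAt (hf : ContDiffOn ℝ 1 (fun p : ℝ × ℝ => f p.1 p.2) (univ ×ˢ Icc 0 T))
    {x t : ℝ} (ht : t ∈ Ioo 0 T) :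
    ContDiffAt ℝ 1 (fun p : ℝ × ℝ => f p.1 p.2) (x, t) :=
  hf.contDiffAt (prod_mem_nhds univ_mem (Icc_mem_nhds ht.1 ht.2))

lemma aux_hasDerivAt_t (hf : ContDiffOn ℝ 1 (fun p : ℝ × ℝ => f p.1 p.2) (univ ×ˢ Icc 0 T))
    {x t : ℝ} (ht : t ∈ Ioo 0 T) :
    HasDerivAt (fun s => f x s)
      (fderiv ℝ (fun p : ℝ × ℝ => f p.1 p.2) (x, t) (0, 1)) t := by
  have h := ((aux_contDiffAt hf (x := x) ht).differentiableAt one_ne_zero).hasFDerivAt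
  have h2 : HasDerivAt (fun s : ℝ => ((x, s) : ℝ × ℝ)) ((0 : ℝ), (1 : ℝ)) t :=
    (hasDerivAt_const t x).prodMk (hasDerivAt_id t)
  exact h.comp_hasDerivAt t h2

lemma aux_hasDerivAt_x (hf : ContDiffOn ℝ 1 (fun p : ℝ × ℝ => f p.1 p.2) (univ ×ˢ Icc 0 T))
    {x t : ℝ} (ht : t ∈ Ioo 0 T) :
    HasDerivAt (fun y => f y t)
      (fderiv ℝ (fun p : ℝ × ℝ => f p.1 p.2) (x, t) (1, 0)) x := by
  have h := ((aux_contDiffAt hf (x := x) ht).differentiableAt one_ne_zero).hasFDerivAt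
  have h2 : HasDerivAt (fun y : ℝ => ((y, t) : ℝ × ℝ)) ((1 : ℝ), (0 : ℝ)) x :=
    (hasDerivAt_id x).prodMk (hasDerivAt_const x t)
  exact h.comp_hasDerivAt x h2

lemma aux_cont_Dt (hf : ContDiffOn ℝ 1 (fun p : ℝ × ℝ => f p.1 p.2) (univ ×ˢ Icc 0 T)) :
    ContinuousOn (fun p : ℝ × ℝ => fderiv ℝ (fun p : ℝ × ℝ => f p.1 p.2) p ((0 : ℝ), (1 : ℝ)))
      (univ ×ˢ Ioo 0 T) := by
  have ho : IsOpen ((univ : Set ℝ) ×ˢ Ioo 0 T) := isOpen_univ.prod isOpen_Ioo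
  have hm : ((univ : Set ℝ) ×ˢ Ioo 0 T) ⊆ univ ×ˢ Icc 0 T :=
    prod_mono subset_rfl Ioo_subset_Icc_self
  exact ((hf.mono hm).continuousOn_fderiv_of_isOpen ho le_rfl).clm_apply continuousOn_const

lemma aux_cont_slice (hf : ContDiffOn ℝ 1 (fun p : ℝ × ℝ => f p.1 p.2) (univ ×ˢ Icc 0 T))
    {t : ℝ} (ht : t ∈ Ioo 0 T) : Continuous (fun x => f x t) := by
  rw [continuous_iff_continuousAt]
  intro x
  have h1 : ContinuousAt (fun y : ℝ => ((y, t) : ℝ × ℝ)) x :=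
    (continuous_id.prodMk continuous_const).continuousAt
  exact ContinuousAt.comp (f := fun y : ℝ => ((y, t) : ℝ × ℝ))
    (aux_contDiffAt hf (x := x) ht).continuousAt h1

end Aux
/-- for a classical solution of system (B) and `a < b`,
the map `t ↦ ∫ₐᵇ (b₁² + b₂²) dx` is differentiable on `(0,T)` with derivative
`2·b₁(b,t)·b₂(b,t) − 2·b₁(a,t)·b₂(a,t)`. -/
theorem stmt4 (N₀ : ℝ → ℝ) (T : ℝ) (b₁ b₂ : ℝ → ℝ → ℝ)
    (h : IsSolB N₀ T b₁ b₂) (a b : ℝ) (hab : a < b) :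
    ∀ t ∈ Set.Ioo (0 : ℝ) T,
      HasDerivAt (fun s => ∫ x in a..b, (b₁ x s ^ 2 + b₂ x s ^ 2))
        (2 * b₁ b t * b₂ b t - 2 * b₁ a t * b₂ a t) t := by
  obtain ⟨hC1, hC2, hPDE⟩ := h
  intro t ht
  -- abbreviations for the time partial derivatives
  set D₁ : ℝ → ℝ → ℝ :=
    fun x s => fderiv ℝ (fun p : ℝ × ℝ => b₁ p.1 p.2) (x, s) ((0 : ℝ), (1 : ℝ)) with hD₁
  set D₂ : ℝ → ℝ → ℝ :=
    fun x s => fderiv ℝ (fun p : ℝ × ℝ => b₂ p.1 p.2) (x, s) ((0 : ℝ), (1 : ℝ)) with hD₂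
  set G : ℝ × ℝ → ℝ :=
    fun p => 2 * b₁ p.1 p.2 * D₁ p.1 p.2 + 2 * b₂ p.1 p.2 * D₂ p.1 p.2 with hG
  set ε : ℝ := min t (T - t) / 2 with hε
  have hεpos : 0 < ε := by
    have := lt_min ht.1 (sub_pos.mpr ht.2)
    positivity
  have hεt : ε ≤ t / 2 := by
    have := min_le_left t (T - t); rw [hε]; linarith
  have hεT : ε ≤ (T - t) / 2 := by
    have := min_le_right t (T - t); rw [hε]; linarith
  have hIoo : ∀ s : ℝ, |s - t| ≤ ε → s ∈ Ioo (0 : ℝ) T := by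
    intro s hs
    obtain ⟨h1, h2⟩ := abs_le.mp hs
    constructor <;> [linarith [ht.1]; linarith [ht.2]]
  have ho : IsOpen ((univ : Set ℝ) ×ˢ Ioo (0 : ℝ) T) := isOpen_univ.prod isOpen_Ioo
  have hm : ((univ : Set ℝ) ×ˢ Ioo (0 : ℝ) T) ⊆ univ ×ˢ Icc 0 T :=
    prod_mono subset_rfl Ioo_subset_Icc_self
  -- continuity of G on the open strip
  have contG : ContinuousOn G ((univ : Set ℝ) ×ˢ Ioo (0 : ℝ) T) := by
    have c1 : ContinuousOn (fun p : ℝ × ℝ => b₁ p.1 p.2) ((univ : Set ℝ) ×ˢ Ioo (0 : ℝ) T) :=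
      hC1.continuousOn.mono hm
    have c2 : ContinuousOn (fun p : ℝ × ℝ => b₂ p.1 p.2) ((univ : Set ℝ) ×ˢ Ioo (0 : ℝ) T) :=
      hC2.continuousOn.mono hm
    have d1 := aux_cont_Dt hC1
    have d2 := aux_cont_Dt hC2
    exact ((continuousOn_const.mul c1).mul d1).add ((continuousOn_const.mul c2).mul d2)
  -- the compact set and the bound
  have hK : IsCompact ((uIcc a b) ×ˢ Icc (t - ε) (t + ε)) := isCompact_uIcc.prod isCompact_Icc
  have hKU : (uIcc a b) ×ˢ Icc (t - ε) (t + ε) ⊆ (univ : Set ℝ) ×ˢ Ioo (0 : ℝ) T := by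
    refine prod_mono (subset_univ _) ?_
    intro s hs
    exact hIoo s (abs_le.mpr ⟨by linarith [hs.1], by linarith [hs.2]⟩)
  obtain ⟨C, hC⟩ := hK.exists_bound_of_continuousOn (contG.mono hKU)
  -- G is continuous in x for fixed s ∈ Ioo 0 T
  have contGslice : ∀ s ∈ Ioo (0 : ℝ) T, Continuous (fun x => G (x, s)) := by
    intro s hs
    rw [continuous_iff_continuousAt]
    intro x
    have h1 : ContinuousAt (fun y : ℝ => ((y, s) : ℝ × ℝ)) x :=
      (continuous_id.prodMk continuous_const).continuousAt
    exact ContinuousAt.comp (f := fun y : ℝ => ((y, s) : ℝ × ℝ))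
      (contG.continuousAt (ho.mem_nhds ⟨mem_univ x, hs⟩)) h1
  have hball : ∀ s ∈ Metric.ball t ε, s ∈ Ioo (0 : ℝ) T := by
    intro s hs
    rw [Metric.mem_ball, Real.dist_eq] at hs
    exact hIoo s hs.le
  -- differentiate under the integral sign
  have hF_meas : ∀ᶠ s in nhds t,
      AEStronglyMeasurable (fun x => b₁ x s ^ 2 + b₂ x s ^ 2) (volume.restrict (uIoc a b)) := by
    filter_upwards [Metric.ball_mem_nhds t hεpos] with s hs
    exact (((aux_cont_slice hC1 (hball s hs)).pow 2).add
      ((aux_cont_slice hC2 (hball s hs)).pow 2)).aestronglyMeasurable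
  have hF_int : IntervalIntegrable (fun x => b₁ x t ^ 2 + b₂ x t ^ 2) volume a b :=
    (((aux_cont_slice hC1 ht).pow 2).add
      ((aux_cont_slice hC2 ht).pow 2)).intervalIntegrable a b
  have hF'_meas : AEStronglyMeasurable (fun x => G (x, t)) (volume.restrict (uIoc a b)) :=
    (contGslice t ht).aestronglyMeasurable
  have h_bound : ∀ᵐ x ∂(volume : Measure ℝ), x ∈ uIoc a b →
      ∀ s ∈ Metric.ball t ε, ‖G (x, s)‖ ≤ C := by
    filter_upwards with x hx s hs
    refine hC (x, s) ⟨uIoc_subset_uIcc hx, ?_⟩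
    rw [Metric.mem_ball, Real.dist_eq] at hs
    obtain ⟨h1, h2⟩ := abs_le.mp hs.le
    exact ⟨by linarith, by linarith⟩
  have h_diff : ∀ᵐ x ∂(volume : Measure ℝ), x ∈ uIoc a b → ∀ s ∈ Metric.ball t ε,
      HasDerivAt (fun s => b₁ x s ^ 2 + b₂ x s ^ 2) (G (x, s)) s := by
    filter_upwards with x hx s hs
    have hs' := hball s hs
    have h1 := aux_hasDerivAt_t hC1 (x := x) hs'
    have h2 := aux_hasDerivAt_t hC2 (x := x) hs'
    have := (h1.pow 2).add (h2.pow 2)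
    refine this.congr_deriv ?_
    simp only [hG]
    push_cast
    ring
  obtain ⟨-, hMain⟩ := intervalIntegral.hasDerivAt_integral_of_dominated_loc_of_deriv_le
    (F := fun s x => b₁ x s ^ 2 + b₂ x s ^ 2) (F' := fun s x => G (x, s))
    (μ := volume) (x₀ := t) (a := a) (b := b) (bound := fun _ => C) (Metric.ball_mem_nhds t hεpos)
    hF_meas hF_int hF'_meas h_bound intervalIntegrable_const h_diff
  -- compute the value of the derivative integral via FTC
  have hval : (∫ x in a..b, G (x, t))
      = 2 * b₁ b t * b₂ b t - 2 * b₁ a t * b₂ a t := by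
    have hderiv : ∀ x ∈ uIcc a b,
        HasDerivAt (fun y => 2 * b₁ y t * b₂ y t) (G (x, t)) x := by
      intro x _
      have hx1 := aux_hasDerivAt_x hC1 (x := x) ht
      have hx2 := aux_hasDerivAt_x hC2 (x := x) ht
      have ht1 := aux_hasDerivAt_t hC1 (x := x) ht
      have ht2 := aux_hasDerivAt_t hC2 (x := x) ht
      have hP := hPDE x t ⟨ht.1.le, ht.2.le⟩
      have e1 : D₁ x t = fderiv ℝ (fun p : ℝ × ℝ => b₂ p.1 p.2) (x, t) ((1 : ℝ), (0 : ℝ))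
          + Ncoef N₀ (b₁ x t) (b₂ x t) * b₂ x t := by
        simp only [hD₁]; rw [← ht1.deriv, hP.1, hx2.deriv]
      have e2 : D₂ x t = fderiv ℝ (fun p : ℝ × ℝ => b₁ p.1 p.2) (x, t) ((1 : ℝ), (0 : ℝ))
          - Ncoef N₀ (b₁ x t) (b₂ x t) * b₁ x t := by
        simp only [hD₂]; rw [← ht2.deriv, hP.2, hx1.deriv]
      have hprod := (hx1.const_mul (2 : ℝ)).mul hx2
      refine hprod.congr_deriv ?_
      simp only [hG, e1, e2]
      ring
    have hint : IntervalIntegrable (fun x => G (x, t)) volume a b :=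
      (contGslice t ht).intervalIntegrable a b
    rw [intervalIntegral.integral_eq_sub_of_hasDerivAt hderiv hint]
  rw [hval] at hMain
  exact hMain
end

section
/- Let (w₁, w₂) be a classical solution of system (W) on ℝ × [0,T] such that for each t ∈ [0,T] the functions x ↦ w₁(x,t)² and x ↦ w₂(x,t)² are integrable on ℝ, w₁(x,t) → 0 and w₂(x,t) → 0 as |x| → ∞, and on each compact time interval the functions |wᵢ·∂ₜwᵢ| are dominated by an integrable function of x. Then the energy E(t) = ∫_ℝ (w₁²(x,t) + w₂²(x,t)) dx is constant in t: E(t) = E(0) for all t ∈ [0,T]. -/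
open Real Set Filter MeasureTheory

/-- for a classical solution of system (W) whose squares are
integrable in `x`, which decays to `0` as `|x| → ∞`, and for which `|wᵢ·∂ₜwᵢ|`
is dominated on compact time intervals by an integrable function of `x`,
the energy `E(t) = ∫_ℝ (w₁² + w₂²) dx` is constant: `E(t) = E(0)` on `[0,T]`. -/
theorem stmt5 (N₀ : ℝ → ℝ) (T : ℝ) (w₁ w₂ : ℝ → ℝ → ℝ)
    (h : IsSolW N₀ T w₁ w₂)
    (hint : ∀ t ∈ Set.Icc (0 : ℝ) T,
      Integrable (fun x => w₁ x t ^ 2) ∧ Integrable (fun x => w₂ x t ^ 2))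
    (hdecay : ∀ t ∈ Set.Icc (0 : ℝ) T,
      Tendsto (fun x => w₁ x t) atTop (nhds 0) ∧
      Tendsto (fun x => w₁ x t) atBot (nhds 0) ∧
      Tendsto (fun x => w₂ x t) atTop (nhds 0) ∧
      Tendsto (fun x => w₂ x t) atBot (nhds 0))
    (hdom : ∀ t₀ t₁ : ℝ, 0 ≤ t₀ → t₀ ≤ t₁ → t₁ ≤ T →
      ∃ g : ℝ → ℝ, Integrable g ∧
        ∀ x : ℝ, ∀ t ∈ Set.Icc t₀ t₁,
          |w₁ x t * deriv (fun s => w₁ x s) t|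
            + |w₂ x t * deriv (fun s => w₂ x s) t| ≤ g x) :
    ∀ t ∈ Set.Icc (0 : ℝ) T,
      ∫ x : ℝ, (w₁ x t ^ 2 + w₂ x t ^ 2) = ∫ x : ℝ, (w₁ x 0 ^ 2 + w₂ x 0 ^ 2) := by
  intro t ht
  obtain ⟨h1, h2, heq⟩ := h
  have hT : (0:ℝ) ≤ T := le_trans ht.1 ht.2
  have h0T : (0:ℝ) ∈ Set.Icc (0:ℝ) T := ⟨le_rfl, hT⟩
  -- continuity of sections
  have hcx : ∀ (w : ℝ → ℝ → ℝ),
      ContDiffOn ℝ 1 (fun p : ℝ × ℝ => w p.1 p.2) (Set.univ ×ˢ Set.Icc 0 T) →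
      ∀ s ∈ Set.Icc (0:ℝ) T, Continuous fun x => w x s := fun w hw s hs =>
    hw.continuousOn.comp_continuous (continuous_id.prodMk continuous_const)
      (fun x => ⟨Set.mem_univ x, hs⟩)
  have hct : ∀ (w : ℝ → ℝ → ℝ),
      ContDiffOn ℝ 1 (fun p : ℝ × ℝ => w p.1 p.2) (Set.univ ×ˢ Set.Icc 0 T) →
      ∀ x : ℝ, ContinuousOn (fun s => w x s) (Set.Icc 0 T) := fun w hw x =>
    hw.continuousOn.comp ((continuous_const.prodMk continuous_id).continuousOn)
      (fun s hs => ⟨Set.mem_univ x, hs⟩)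
  -- differentiability at interior times
  have hdiffAt : ∀ (w : ℝ → ℝ → ℝ),
      ContDiffOn ℝ 1 (fun p : ℝ × ℝ => w p.1 p.2) (Set.univ ×ˢ Set.Icc 0 T) →
      ∀ x : ℝ, ∀ s ∈ Set.Ioo (0:ℝ) T,
        HasDerivAt (fun s' => w x s') (deriv (fun s' => w x s') s) s ∧
        HasDerivAt (fun y => w y s) (deriv (fun y => w y s) x) x := by
    intro w hw x s hs
    have hmem : (Set.univ ×ˢ Set.Icc (0:ℝ) T) ∈ nhds ((x, s) : ℝ × ℝ) :=
      prod_mem_nhds Filter.univ_mem (Icc_mem_nhds hs.1 hs.2)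
    have hd : DifferentiableAt ℝ (fun p : ℝ × ℝ => w p.1 p.2) (x, s) :=
      (hw.contDiffAt hmem).differentiableAt one_ne_zero
    constructor
    · have hc : DifferentiableAt ℝ (fun s' : ℝ => ((x, s') : ℝ × ℝ)) s :=
        (differentiableAt_const x).prodMk differentiableAt_id
      exact (hd.comp s hc).hasDerivAt
    · have hc : DifferentiableAt ℝ (fun y : ℝ => ((y, s) : ℝ × ℝ)) x :=
        differentiableAt_id.prodMk (differentiableAt_const s)
      exact (hd.comp x hc).hasDerivAt
  set F : ℝ → ℝ → ℝ := fun s x => w₁ x s ^ 2 + w₂ x s ^ 2 with hF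
  set F' : ℝ → ℝ → ℝ := fun s x =>
    2 * (w₁ x s * deriv (fun u => w₁ x u) s + w₂ x s * deriv (fun u => w₂ x u) s) with hF'
  -- time derivative of F
  have hFt : ∀ x : ℝ, ∀ s ∈ Set.Ioo (0:ℝ) T, HasDerivAt (fun u => F u x) (F' s x) s := by
    intro x s hs
    have d1 := (hdiffAt w₁ h1 x s hs).1
    have d2 := (hdiffAt w₂ h2 x s hs).1
    have := (d1.pow 2).add (d2.pow 2)
    convert this using 1
    · rfl
    · rfl
    · rfl
    simp [hF']
    ring
  -- space derivative identity
  have hFx : ∀ s ∈ Set.Ioo (0:ℝ) T, ∀ x : ℝ,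
      HasDerivAt (fun y => w₁ y s ^ 2 - w₂ y s ^ 2) (F' s x) x := by
    intro s hs x
    have d1 := (hdiffAt w₁ h1 x s hs).2
    have d2 := (hdiffAt w₂ h2 x s hs).2
    have := (d1.pow 2).sub (d2.pow 2)
    convert this using 1
    · rfl
    · rfl
    · rfl
    have hpde := heq x s ⟨hs.1.le, hs.2.le⟩
    simp only [hF', hpde.1, hpde.2]
    ring
  -- measurability
  have hFmeas : ∀ s ∈ Set.Icc (0:ℝ) T, AEStronglyMeasurable (F s) volume := by
    intro s hs
    exact (((hcx w₁ h1 s hs).pow 2).add ((hcx w₂ h2 s hs).pow 2)).aestronglyMeasurable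
  have hF'meas : ∀ s ∈ Set.Ioo (0:ℝ) T, AEStronglyMeasurable (F' s) volume := by
    intro s hs
    have : F' s = fun x => deriv (fun y => w₁ y s ^ 2 - w₂ y s ^ 2) x := by
      funext x
      exact ((hFx s hs x).deriv).symm
    rw [this]
    exact (measurable_deriv _).aestronglyMeasurable
  -- dominating function
  obtain ⟨g, hg_int, hg⟩ := hdom 0 T le_rfl hT le_rfl
  have hg0 : ∀ x, 0 ≤ g x := fun x => le_trans (by positivity) (hg x 0 h0T)
  have hbound : ∀ x : ℝ, ∀ s ∈ Set.Icc (0:ℝ) T, |F' s x| ≤ 2 * g x := by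
    intro x s hs
    have h1' := hg x s hs
    have habs := abs_add_le (w₁ x s * deriv (fun u => w₁ x u) s)
      (w₂ x s * deriv (fun u => w₂ x u) s)
    have h2 : |F' s x| = 2 * |w₁ x s * deriv (fun u => w₁ x u) s
        + w₂ x s * deriv (fun u => w₂ x u) s| := by
      simp only [hF']
      rw [abs_mul, abs_two]
    rw [h2]
    linarith
  -- continuity of the time sections of F
  have hFcont : ∀ x : ℝ, ContinuousOn (fun s => F s x) (Set.Icc 0 T) := by
    intro x
    exact ((hct w₁ h1 x).pow 2).add ((hct w₂ h2 x).pow 2)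
  -- a pointwise bound on F via the mean value inequality
  have hFbound : ∀ x : ℝ, ∀ s ∈ Set.Icc (0:ℝ) T, F s x ≤ F 0 x + 2 * g x * T := by
    intro x s hs
    have hanti : AntitoneOn (fun s => F s x - 2 * g x * s) (Set.Icc 0 T) := by
      apply antitoneOn_of_deriv_nonpos (convex_Icc 0 T)
      · exact (hFcont x).sub (continuous_const.mul continuous_id).continuousOn
      · rw [interior_Icc]
        intro u hu
        exact ((hFt x u hu).sub ((hasDerivAt_id u).const_mul (2 * g x))).differentiableAt.differentiableWithinAt
      · rw [interior_Icc]
        intro u hu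
        have hd : HasDerivAt (fun s => F s x - 2 * g x * s) (F' u x - 2 * g x * 1) u :=
          (hFt x u hu).sub ((hasDerivAt_id u).const_mul (2 * g x))
        rw [hd.deriv]
        have := hbound x u ⟨hu.1.le, hu.2.le⟩
        have := abs_le.1 this
        linarith [this.2]
    have := hanti h0T hs hs.1
    simp only at this
    nlinarith [hs.1, hs.2, hg0 x]
  -- Energy is continuous on [0,T]
  have hEcont : ContinuousOn (fun s => ∫ x, F s x) (Set.Icc 0 T) := by
    apply MeasureTheory.continuousOn_of_dominated hFmeas
      (bound := fun x => F 0 x + 2 * g x * T)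
    · intro s hs
      filter_upwards with x
      have hnn : (0:ℝ) ≤ F s x := by positivity
      rw [Real.norm_eq_abs, abs_of_nonneg hnn]
      exact hFbound x s hs
    · have hi0 : Integrable (F 0) := ((hint 0 h0T).1.add (hint 0 h0T).2)
      have : Integrable (fun x => 2 * g x * T) := by
        have := hg_int.const_mul (2 * T)
        convert this using 2 with x
        · rfl
        ring
      exact hi0.add this
    · filter_upwards with x
      exact hFcont x
  -- Energy has derivative 0 at interior times
  have hE' : ∀ s ∈ Set.Ioo (0:ℝ) T, HasDerivAt (fun u => ∫ x, F u x) 0 s := by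
    intro s hs
    have hε : (0:ℝ) < min s (T - s) := lt_min hs.1 (by linarith [hs.2])
    have hball : Metric.ball s (min s (T - s)) ⊆ Set.Ioo (0:ℝ) T := by
      intro u hu
      rw [Metric.mem_ball, Real.dist_eq, abs_lt] at hu
      constructor
      · have := hu.1
        have h1 := min_le_left s (T - s)
        linarith
      · have := hu.2
        have h2 := min_le_right s (T - s)
        linarith
    have key := hasDerivAt_integral_of_dominated_loc_of_deriv_le (Metric.ball_mem_nhds s hε)
      (F := F) (F' := F') (bound := fun x => 2 * g x)
      (by
        filter_upwards [Ioo_mem_nhds hs.1 hs.2] with u hu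
        exact hFmeas u ⟨hu.1.le, hu.2.le⟩)
      ((hint s ⟨hs.1.le, hs.2.le⟩).1.add (hint s ⟨hs.1.le, hs.2.le⟩).2)
      (hF'meas s hs)
      (by
        filter_upwards with x u hu
        have hu' := hball hu
        rw [Real.norm_eq_abs]
        exact hbound x u ⟨hu'.1.le, hu'.2.le⟩)
      (hg_int.const_mul 2)
      (by
        filter_upwards with x u hu
        exact hFt x u (hball hu))
    have hzero : (∫ x, F' s x) = 0 := by
      have hint' : Integrable (F' s) := key.1
      have hd := hdecay s ⟨hs.1.le, hs.2.le⟩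
      have htop : Tendsto (fun x => w₁ x s ^ 2 - w₂ x s ^ 2) atTop (nhds 0) := by
        have := (hd.1.pow 2).sub (hd.2.2.1.pow 2)
        simpa using this
      have hbot : Tendsto (fun x => w₁ x s ^ 2 - w₂ x s ^ 2) atBot (nhds 0) := by
        have := (hd.2.1.pow 2).sub (hd.2.2.2.pow 2)
        simpa using this
      have := MeasureTheory.integral_of_hasDerivAt_of_tendsto (hFx s hs) hint' hbot htop
      simpa using this
    have := key.2
    rwa [hzero] at this
  -- Conclude: derivative is zero on the interior, so E is constant
  have hmono : MonotoneOn (fun s => ∫ x, F s x) (Set.Icc 0 T) := by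
    apply monotoneOn_of_deriv_nonneg (convex_Icc 0 T) hEcont
    · rw [interior_Icc]
      exact fun s hs => (hE' s hs).differentiableAt.differentiableWithinAt
    · rw [interior_Icc]
      intro s hs
      rw [(hE' s hs).deriv]
  have hanti : AntitoneOn (fun s => ∫ x, F s x) (Set.Icc 0 T) := by
    apply antitoneOn_of_deriv_nonpos (convex_Icc 0 T) hEcont
    · rw [interior_Icc]
      exact fun s hs => (hE' s hs).differentiableAt.differentiableWithinAt
    · rw [interior_Icc]
      intro s hs
      rw [(hE' s hs).deriv]
  exact le_antisymm (hanti h0T ht ht.1) (hmono h0T ht ht.1)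
end

section
/- Let (w₁, w₂) be a classical solution of system (W) on ℝ × [0,T] and let a < b. Then for every t with 0 ≤ t < (b−a)/2 and t ≤ T, the cone energy satisfies E_{(a,b)}(t) ≤ E_{(a,b)}(0), i.e. ∫_{a+t}^{b−t} (w₁²(x,t) + w₂²(x,t)) dx ≤ ∫ₐᵇ (w₁²(x,0) + w₂²(x,0)) dx. -/
open Real Set Filter MeasureTheory

lemma aux_boundary {g : ℝ → ℝ → ℝ} {c : ℝ → ℝ} {c' s₀ c₀ : ℝ}
    (hc : ∀ s, c s - c₀ = c' * (s - s₀))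
    (hcont : ContinuousAt (fun p : ℝ × ℝ => g p.1 p.2) (c₀, s₀))
    (hint : ∀ s, IntervalIntegrable (fun x => g x s) MeasureTheory.volume c₀ (c s)) :
    HasDerivAt (fun s => ∫ x in c₀..(c s), g x s) (c' * g c₀ s₀) s₀ := by
  have hc0 : c s₀ = c₀ := by have := hc s₀; simp at this; linarith
  rw [hasDerivAt_iff_isLittleO, Asymptotics.isLittleO_iff]
  intro ε hε
  set K := g c₀ s₀ with hK
  have h1c : (0:ℝ) < 1 + |c'| := by positivity
  have hε' : 0 < ε / (1 + |c'|) := div_pos hε h1c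
  obtain ⟨δ, hδpos, hδ⟩ := Metric.continuousAt_iff.1 hcont _ hε'
  have hδ'pos : 0 < δ / (1 + |c'|) := div_pos hδpos h1c
  filter_upwards [Metric.ball_mem_nhds s₀ hδ'pos] with s hs
  rw [Real.ball_eq_Ioo] at hs
  have hss : |s - s₀| < δ / (1 + |c'|) := by
    rw [abs_lt]; constructor <;> [linarith [hs.1]; linarith [hs.2]]
  have hcs : |c s - c₀| = |c'| * |s - s₀| := by rw [hc s, abs_mul]
  have hcsδ : |c s - c₀| < δ := by
    rw [hcs]
    calc |c'| * |s - s₀| ≤ (1 + |c'|) * |s - s₀| := by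
          apply mul_le_mul_of_nonneg_right (by linarith) (abs_nonneg _)
      _ < (1 + |c'|) * (δ / (1 + |c'|)) := by
          exact mul_lt_mul_of_pos_left hss h1c
      _ = δ := by field_simp
  have hsδ : |s - s₀| < δ := lt_of_lt_of_le hss (by
    rw [div_le_iff₀ h1c]; nlinarith [hδpos, abs_nonneg c'])
  -- pointwise bound on the small interval
  have hbound : ∀ x ∈ Set.uIoc c₀ (c s), ‖g x s - K‖ ≤ ε / (1 + |c'|) := by
    intro x hx
    have hxc : |x - c₀| ≤ |c s - c₀| := by
      rcases Set.mem_uIoc.1 hx with h | h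
      · rw [abs_of_nonneg (by linarith [h.1] : (0:ℝ) ≤ x - c₀)]
        exact le_trans (by linarith [h.2]) (le_abs_self _)
      · rw [abs_of_nonpos (by linarith [h.2] : x - c₀ ≤ 0)]
        exact le_trans (by linarith [h.1]) (neg_le_abs _)
    have hd : dist (x, s) (c₀, s₀) < δ := by
      rw [Prod.dist_eq, max_lt_iff]
      exact ⟨lt_of_le_of_lt (by rw [Real.dist_eq]; exact hxc) hcsδ,
        by rw [Real.dist_eq]; exact hsδ⟩
    have := hδ hd
    rw [Real.dist_eq] at this
    exact le_of_lt this
  have hKint : IntervalIntegrable (fun _ : ℝ => K) MeasureTheory.volume c₀ (c s) :=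
    intervalIntegrable_const
  have heq : (∫ x in c₀..(c s), g x s) - (∫ x in c₀..(c s₀), g x s₀) - (s - s₀) • (c' * K)
      = ∫ x in c₀..(c s), (g x s - K) := by
    rw [hc0, intervalIntegral.integral_same, sub_zero,
      intervalIntegral.integral_sub (hint s) hKint, intervalIntegral.integral_const]
    have : (s - s₀) • (c' * K) = (c s - c₀) • K := by
      rw [hc s]; simp [smul_eq_mul]; ring
    rw [this]
  calc ‖(∫ x in c₀..(c s), g x s) - (∫ x in c₀..(c s₀), g x s₀) - (s - s₀) • (c' * K)‖
      = ‖∫ x in c₀..(c s), (g x s - K)‖ := by rw [heq]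
    _ ≤ (ε / (1 + |c'|)) * |c s - c₀| :=
        intervalIntegral.norm_integral_le_of_norm_le_const hbound
    _ ≤ ε * ‖s - s₀‖ := by
        rw [hcs, Real.norm_eq_abs]
        rw [div_mul_eq_mul_div, div_le_iff₀ h1c]
        nlinarith [abs_nonneg (s - s₀), abs_nonneg c', le_of_lt hε]


/-- for a classical solution of system (W) and `a < b`, the cone
energy decreases from its initial value: for `0 ≤ t < (b−a)/2`, `t ≤ T`,
`∫_{a+t}^{b−t} (w₁²(·,t) + w₂²(·,t)) ≤ ∫ₐᵇ (w₁²(·,0) + w₂²(·,0))`. -/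
theorem stmt8 (N₀ : ℝ → ℝ) (T : ℝ) (w₁ w₂ : ℝ → ℝ → ℝ)
    (h : IsSolW N₀ T w₁ w₂) (a b : ℝ) (hab : a < b) :
    ∀ t : ℝ, 0 ≤ t → t < (b - a) / 2 → t ≤ T →
      (∫ x in (a + t)..(b - t), (w₁ x t ^ 2 + w₂ x t ^ 2))
        ≤ ∫ x in a..b, (w₁ x 0 ^ 2 + w₂ x 0 ^ 2) := by
  intro t ht0 htcone htT
  rcases eq_or_lt_of_le ht0 with rfl | htpos
  · simp
  obtain ⟨h₁, h₂, hpde⟩ := h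
  have hT0 : (0 : ℝ) < T := lt_of_lt_of_le htpos htT
  set W₁ : ℝ × ℝ → ℝ := fun p => w₁ p.1 p.2 with hW₁
  set W₂ : ℝ × ℝ → ℝ := fun p => w₂ p.1 p.2 with hW₂
  set U : Set (ℝ × ℝ) := Set.univ ×ˢ Set.Ioo 0 T with hU
  have hUopen : IsOpen U := isOpen_univ.prod isOpen_Ioo
  have hUsub : U ⊆ Set.univ ×ˢ Set.Icc 0 T :=
    Set.prod_mono subset_rfl Set.Ioo_subset_Icc_self
  have hC1 : ContDiffOn ℝ 1 W₁ U := h₁.mono hUsub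
  have hC2 : ContDiffOn ℝ 1 W₂ U := h₂.mono hUsub
  -- pointwise total derivatives
  have hdiff1 : ∀ p ∈ U, HasFDerivAt W₁ (fderiv ℝ W₁ p) p := fun p hp =>
    ((hC1.contDiffAt (hUopen.mem_nhds hp)).differentiableAt one_ne_zero).hasFDerivAt
  have hdiff2 : ∀ p ∈ U, HasFDerivAt W₂ (fderiv ℝ W₂ p) p := fun p hp =>
    ((hC2.contDiffAt (hUopen.mem_nhds hp)).differentiableAt one_ne_zero).hasFDerivAt
  set dx₁ : ℝ × ℝ → ℝ := fun p => fderiv ℝ W₁ p (1, 0) with hdx₁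
  set dx₂ : ℝ × ℝ → ℝ := fun p => fderiv ℝ W₂ p (1, 0) with hdx₂
  set dt₁ : ℝ × ℝ → ℝ := fun p => fderiv ℝ W₁ p (0, 1) with hdt₁
  set dt₂ : ℝ × ℝ → ℝ := fun p => fderiv ℝ W₂ p (0, 1) with hdt₂
  -- directional derivatives
  have hx1 : ∀ p ∈ U, HasDerivAt (fun y => w₁ y p.2) (dx₁ p) p.1 := by
    intro p hp
    have hcurve : HasDerivAt (fun y : ℝ => (y, p.2)) ((1 : ℝ), (0 : ℝ)) p.1 :=
      (hasDerivAt_id p.1).prodMk (hasDerivAt_const p.1 p.2)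
    exact (hdiff1 p hp).comp_hasDerivAt p.1 hcurve
  have hx2 : ∀ p ∈ U, HasDerivAt (fun y => w₂ y p.2) (dx₂ p) p.1 := by
    intro p hp
    exact (hdiff2 p hp).comp_hasDerivAt p.1
      ((hasDerivAt_id p.1).prodMk (hasDerivAt_const p.1 p.2))
  have ht1 : ∀ p ∈ U, HasDerivAt (fun s => w₁ p.1 s) (dt₁ p) p.2 := by
    intro p hp
    exact (hdiff1 p hp).comp_hasDerivAt p.2
      ((hasDerivAt_const p.2 p.1).prodMk (hasDerivAt_id p.2))
  have ht2 : ∀ p ∈ U, HasDerivAt (fun s => w₂ p.1 s) (dt₂ p) p.2 := by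
    intro p hp
    exact (hdiff2 p hp).comp_hasDerivAt p.2
      ((hasDerivAt_const p.2 p.1).prodMk (hasDerivAt_id p.2))
  -- the PDE in terms of dx, dt
  have hpde1 : ∀ p ∈ U, dt₁ p = dx₁ p - Ncoef N₀ (W₁ p) (W₂ p) * W₂ p := by
    intro p hp
    have hmem : p.2 ∈ Set.Icc (0 : ℝ) T := Set.Ioo_subset_Icc_self (hp.2 : p.2 ∈ Set.Ioo 0 T)
    have := (hpde p.1 p.2 hmem).1
    rwa [(ht1 p hp).deriv, (hx1 p hp).deriv] at this
  have hpde2 : ∀ p ∈ U, dt₂ p = -dx₂ p + Ncoef N₀ (W₁ p) (W₂ p) * W₁ p := by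
    intro p hp
    have hmem : p.2 ∈ Set.Icc (0 : ℝ) T := Set.Ioo_subset_Icc_self (hp.2 : p.2 ∈ Set.Ioo 0 T)
    have := (hpde p.1 p.2 hmem).2
    rwa [(ht2 p hp).deriv, (hx2 p hp).deriv] at this
  -- energy density and flux
  set G : ℝ × ℝ → ℝ := fun p => W₁ p ^ 2 + W₂ p ^ 2 with hG
  set q : ℝ × ℝ → ℝ := fun p => W₁ p ^ 2 - W₂ p ^ 2 with hq
  set gt : ℝ × ℝ → ℝ := fun p => 2 * W₁ p * dx₁ p - 2 * W₂ p * dx₂ p with hgt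
  -- time derivative of density is gt
  have hgt_t : ∀ p ∈ U, HasDerivAt (fun s => w₁ p.1 s ^ 2 + w₂ p.1 s ^ 2) (gt p) p.2 := by
    intro p hp
    have : HasDerivAt (fun s => w₁ p.1 s ^ 2 + w₂ p.1 s ^ 2) _ p.2 :=
      (((ht1 p hp).pow 2).add ((ht2 p hp).pow 2))
    convert this using 1
    have e1 := hpde1 p hp
    have e2 := hpde2 p hp
    simp only [hgt, hW₁, hW₂, Nat.cast_ofNat, Nat.add_one_sub_one, pow_one]
    rw [e1, e2]; ring
  -- x-derivative of flux is gt
  have hq_x : ∀ p ∈ U, HasDerivAt (fun y => w₁ y p.2 ^ 2 - w₂ y p.2 ^ 2) (gt p) p.1 := by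
    intro p hp
    have : HasDerivAt (fun y => w₁ y p.2 ^ 2 - w₂ y p.2 ^ 2) _ p.1 :=
      (((hx1 p hp).pow 2).sub ((hx2 p hp).pow 2))
    convert this using 1
    simp only [hgt, hW₁, hW₂, Nat.cast_ofNat, Nat.add_one_sub_one, pow_one]
    try ring
  -- continuity facts
  have hGc : ContinuousOn G (Set.univ ×ˢ Set.Icc 0 T) :=
    (h₁.continuousOn.pow 2).add (h₂.continuousOn.pow 2)
  have hfc1 : ContinuousOn (fderiv ℝ W₁) U := hC1.continuousOn_fderiv_of_isOpen hUopen le_rfl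
  have hfc2 : ContinuousOn (fderiv ℝ W₂) U := hC2.continuousOn_fderiv_of_isOpen hUopen le_rfl
  have hgtc : ContinuousOn gt U := by
    apply ContinuousOn.sub
    · exact (continuousOn_const.mul (hC1.continuousOn)).mul
        (hfc1.clm_apply continuousOn_const)
    · exact (continuousOn_const.mul (hC2.continuousOn)).mul
        (hfc2.clm_apply continuousOn_const)
  -- clamped density, globally continuous
  set cl : ℝ → ℝ := fun s => max 0 (min s T) with hcl
  have hclc : Continuous cl := continuous_const.max (continuous_id.min continuous_const)
  have hclmem : ∀ s, cl s ∈ Set.Icc (0 : ℝ) T := by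
    intro s
    refine ⟨le_max_left _ _, max_le hT0.le (min_le_right _ _)⟩
  have hclid : ∀ s ∈ Set.Icc (0 : ℝ) T, cl s = s := by
    intro s hs
    simp only [hcl, min_eq_left hs.2, max_eq_right hs.1]
  set Gc : ℝ × ℝ → ℝ := fun p => G (p.1, cl p.2) with hGcdef
  have hGcc : Continuous Gc := by
    apply hGc.comp_continuous (continuous_fst.prodMk (hclc.comp continuous_snd))
    intro p
    exact ⟨Set.mem_univ _, hclmem _⟩
  have hGcg : ∀ s ∈ Set.Icc (0 : ℝ) T, ∀ x, Gc (x, s) = w₁ x s ^ 2 + w₂ x s ^ 2 := by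
    intro s hs x
    simp only [hGcdef, hclid s hs, hG, hW₁, hW₂]
  have hi : ∀ (s u v : ℝ), IntervalIntegrable (fun x => Gc (x, s)) MeasureTheory.volume u v :=
    fun s u v => (hGcc.comp (continuous_id.prodMk continuous_const)).intervalIntegrable u v
  set E : ℝ → ℝ := fun s => ∫ x in (a + s)..(b - s), Gc (x, s) with hE
  -- continuity of E
  have hEeq : ∀ s, E s = (∫ x in (0:ℝ)..(b - s), Gc (x, s)) - (∫ x in (0:ℝ)..(a + s), Gc (x, s)) := by
    intro s
    show (∫ x in (a + s)..(b - s), Gc (x, s)) = _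
    rw [← intervalIntegral.integral_add_adjacent_intervals (hi s (a+s) 0) (hi s 0 (b-s)),
      intervalIntegral.integral_symm]
    ring
  have hEcont : Continuous E := by
    have hc1 : Continuous fun s => ∫ x in (0:ℝ)..(b - s), Gc (x, s) := by
      apply intervalIntegral.continuous_parametric_intervalIntegral_of_continuous
      · exact hGcc.comp (continuous_snd.prodMk continuous_fst)
      · exact continuous_const.sub continuous_id
    have hc2 : Continuous fun s => ∫ x in (0:ℝ)..(a + s), Gc (x, s) := by
      apply intervalIntegral.continuous_parametric_intervalIntegral_of_continuous
      · exact hGcc.comp (continuous_snd.prodMk continuous_fst)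
      · exact continuous_const.add continuous_id
    have : E = fun s => (∫ x in (0:ℝ)..(b - s), Gc (x, s)) - ∫ x in (0:ℝ)..(a + s), Gc (x, s) :=
      funext hEeq
    rw [this]
    exact hc1.sub hc2
  -- derivative of E on the open interval
  have hderiv : ∀ s₀ ∈ Set.Ioo (0:ℝ) t,
      HasDerivAt E (-(2 * w₂ (b - s₀) s₀ ^ 2) - 2 * w₁ (a + s₀) s₀ ^ 2) s₀ := by
    intro s₀ hs₀
    have hs₀T : s₀ ∈ Set.Ioo (0:ℝ) T := ⟨hs₀.1, lt_of_lt_of_le hs₀.2 htT⟩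
    set A₀ : ℝ := a + s₀ with hA₀
    set B₀ : ℝ := b - s₀ with hB₀
    have hABlt : A₀ < B₀ := by
      have : s₀ < (b - a) / 2 := lt_trans hs₀.2 htcone
      simp only [hA₀, hB₀]; linarith
    have hsmem : ∀ x : ℝ, (x, s₀) ∈ U := fun x => ⟨Set.mem_univ _, hs₀T⟩
    set ε : ℝ := min s₀ (T - s₀) / 2 with hεdef
    have hεpos : 0 < ε := by
      have h1 : 0 < s₀ := hs₀.1
      have h2 : 0 < T - s₀ := by linarith [hs₀T.2]
      simp only [hεdef]; positivity
    have hIccsub : Set.Icc (s₀ - ε) (s₀ + ε) ⊆ Set.Ioo (0:ℝ) T := by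
      intro u hu
      have h1 : ε ≤ s₀ / 2 := by
        simp only [hεdef]
        have := min_le_left s₀ (T - s₀); linarith
      have h2 : ε ≤ (T - s₀) / 2 := by
        simp only [hεdef]
        have := min_le_right s₀ (T - s₀); linarith
      constructor <;> [linarith [hu.1, hs₀.1]; linarith [hu.2, hs₀T.2]]
    have hballsub : Metric.ball s₀ ε ⊆ Set.Ioo (0:ℝ) T := by
      intro u hu
      rw [Metric.mem_ball, Real.dist_eq, abs_lt] at hu
      exact hIccsub ⟨by linarith [hu.1], by linarith [hu.2]⟩
    have hKU : Set.Icc A₀ B₀ ×ˢ Set.Icc (s₀ - ε) (s₀ + ε) ⊆ U := by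
      intro p hp
      exact ⟨Set.mem_univ _, hIccsub hp.2⟩
    obtain ⟨C, hC⟩ := (isCompact_Icc.prod isCompact_Icc).exists_bound_of_continuousOn
      (hgtc.mono hKU)
    -- parametric differentiation on the fixed interval
    have hΦ : HasDerivAt (fun s => ∫ x in A₀..B₀, Gc (x, s))
        (∫ x in A₀..B₀, gt (x, s₀)) s₀ := by
      refine (intervalIntegral.hasDerivAt_integral_of_dominated_loc_of_deriv_le
        (F := fun s x => Gc (x, s)) (F' := fun s x => gt (x, s)) (bound := fun _ => C)
        (Metric.ball_mem_nhds s₀ hεpos) ?_ (hi s₀ A₀ B₀) ?_ ?_ ?_ ?_).2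
      · exact Eventually.of_forall fun s =>
          ((hGcc.comp (continuous_id.prodMk continuous_const)).aestronglyMeasurable)
      · exact (hgtc.comp_continuous (continuous_id.prodMk continuous_const)
          (fun x => hsmem x)).aestronglyMeasurable
      · refine Eventually.of_forall fun x hx => fun s hs => ?_
        apply hC
        refine ⟨?_, ?_⟩
        · exact Set.Ioc_subset_Icc_self (by rwa [Set.uIoc_of_le hABlt.le] at hx)
        · rw [Metric.mem_ball, Real.dist_eq, abs_lt] at hs
          exact ⟨by linarith [hs.1], by linarith [hs.2]⟩
      · exact intervalIntegrable_const
      · refine Eventually.of_forall fun x hx => fun s hs => ?_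
        have hsIoo : s ∈ Set.Ioo (0:ℝ) T := hballsub hs
        have base := hgt_t (x, s) ⟨Set.mem_univ _, hsIoo⟩
        apply base.congr_of_eventuallyEq
        filter_upwards [Ioo_mem_nhds hsIoo.1 hsIoo.2] with u hu
        exact hGcg u (Set.Ioo_subset_Icc_self hu) x
    -- FTC for the flux
    have hFTC : (∫ x in A₀..B₀, gt (x, s₀))
        = (w₁ B₀ s₀ ^ 2 - w₂ B₀ s₀ ^ 2) - (w₁ A₀ s₀ ^ 2 - w₂ A₀ s₀ ^ 2) := by
      apply intervalIntegral.integral_eq_sub_of_hasDerivAt (f := fun y => w₁ y s₀ ^ 2 - w₂ y s₀ ^ 2) (f' := fun x => gt (x, s₀))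
      · intro x hx
        exact hq_x (x, s₀) (hsmem x)
      · exact (hgtc.comp_continuous (continuous_id.prodMk continuous_const)
          (fun x => hsmem x)).intervalIntegrable _ _
    -- boundary terms
    have hR1 : HasDerivAt (fun s => ∫ x in B₀..(b - s), Gc (x, s))
        ((-1) * Gc (B₀, s₀)) s₀ := by
      apply aux_boundary (g := fun x s => Gc (x, s)) (c := fun s => b - s)
      · intro s; simp only [hB₀]; ring
      · exact hGcc.continuousAt
      · intro s; exact hi s _ _
    have hR2 : HasDerivAt (fun s => ∫ x in A₀..(a + s), Gc (x, s))
        ((1 : ℝ) * Gc (A₀, s₀)) s₀ := by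
      apply aux_boundary (g := fun x s => Gc (x, s)) (c := fun s => a + s)
      · intro s; simp only [hA₀]; ring
      · exact hGcc.continuousAt
      · intro s; exact hi s _ _
    -- decomposition of E
    have hEsplit : E = fun s => ((∫ x in A₀..B₀, Gc (x, s))
        + ∫ x in B₀..(b - s), Gc (x, s)) - ∫ x in A₀..(a + s), Gc (x, s) := by
      funext s
      have e1 := intervalIntegral.integral_add_adjacent_intervals
        (hi s (a + s) A₀) (hi s A₀ B₀)
      have e2 := intervalIntegral.integral_add_adjacent_intervals
        (hi s (a + s) B₀) (hi s B₀ (b - s))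
      have e3 := intervalIntegral.integral_symm (μ := MeasureTheory.volume) (a := A₀) (b := a + s) (f := fun x => Gc (x, s))
      show (∫ x in (a + s)..(b - s), Gc (x, s)) = _
      rw [← e2, ← e1, e3]
      ring
    have hEd : HasDerivAt (fun s => ((∫ x in A₀..B₀, Gc (x, s))
        + ∫ x in B₀..(b - s), Gc (x, s)) - ∫ x in A₀..(a + s), Gc (x, s)) _ s₀ :=
      (hΦ.add hR1).sub hR2
    rw [← hEsplit] at hEd
    convert hEd using 1
    rw [hFTC, hGcg s₀ (Set.Ioo_subset_Icc_self hs₀T) B₀,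
      hGcg s₀ (Set.Ioo_subset_Icc_self hs₀T) A₀]
    ring
  -- E is antitone on [0, t]
  have hant : AntitoneOn E (Set.Icc 0 t) := by
    apply antitoneOn_of_deriv_nonpos (convex_Icc 0 t) hEcont.continuousOn
    · intro s hs
      rw [interior_Icc] at hs
      exact (hderiv s hs).differentiableAt.differentiableWithinAt
    · intro s hs
      rw [interior_Icc] at hs
      rw [(hderiv s hs).deriv]
      nlinarith [sq_nonneg (w₂ (b - s) s), sq_nonneg (w₁ (a + s) s)]
  have hfin : E t ≤ E 0 := hant ⟨le_rfl, ht0⟩ ⟨ht0, le_rfl⟩ ht0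
  have hLt : (∫ x in (a + t)..(b - t), (w₁ x t ^ 2 + w₂ x t ^ 2)) = E t := by
    show _ = ∫ x in (a + t)..(b - t), Gc (x, t)
    congr 1
    funext x
    rw [hGcg t ⟨ht0, htT⟩ x]
  have hR0 : (∫ x in a..b, (w₁ x 0 ^ 2 + w₂ x 0 ^ 2)) = E 0 := by
    show _ = ∫ x in (a + 0)..(b - 0), Gc (x, 0)
    rw [add_zero, sub_zero]
    congr 1
    funext x
    rw [hGcg 0 ⟨le_rfl, hT0.le⟩ x]
  rw [hLt, hR0]
  exact hfin
end

section
/- Domain-of-dependence uniqueness: suppose the maps z₁(u,v) = N(u,v)·u and z₂(u,v) = N(u,v)·v are globally Lipschitz on ℝ². Let (w₁, w₂) and (ŵ₁, ŵ₂) be two classical solutions of system (W) on ℝ × [0,T], and let a < b be such that wᵢ(x,0) = ŵᵢ(x,0) for all x ∈ [a,b] and i = 1,2. Then wᵢ(x,t) = ŵᵢ(x,t) for all (x,t) in the cone {(x,t) : 0 ≤ t ≤ T, a + t ≤ x ≤ b − t}. -/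
open Real Set Filter MeasureTheory

set_option maxHeartbeats 1000000 in
lemma sqrt_sq_add_sq_le (a b : ℝ) : Real.sqrt (a^2 + b^2) ≤ |a| + |b| := by
  rw [show |a| + |b| = Real.sqrt ((|a| + |b|)^2) from
    (Real.sqrt_sq (by positivity)).symm]
  apply Real.sqrt_le_sqrt
  nlinarith [abs_nonneg a, abs_nonneg b, sq_abs a, sq_abs b]

/-- FTC along a characteristic line of slope `c`. -/
lemma ftc_char (W : ℝ × ℝ → ℝ) (T : ℝ)
    (hW : ContDiffOn ℝ 1 W (Set.univ ×ˢ Set.Icc 0 T))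
    (c x t : ℝ) (ht0 : 0 ≤ t) (htT : t ≤ T)
    (G : ℝ → ℝ) (hG : ContinuousOn G (Set.Icc 0 t))
    (heq : ∀ s ∈ Set.Ioo 0 t,
      -c * deriv (fun y => W (y, s)) (x + c * (t - s))
        + deriv (fun u => W (x + c * (t - s), u)) s = G s) :
    W (x, t) = W (x + c * t, 0) + ∫ s in (0:ℝ)..t, G s := by
  rcases eq_or_lt_of_le ht0 with h0 | h0
  · simp [← h0]
  set γ : ℝ → ℝ × ℝ := fun s => (x + c * (t - s), s) with hγ
  have hmaps : Set.MapsTo γ (Set.Icc 0 t) (Set.univ ×ˢ Set.Icc 0 T) := by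
    intro s hs
    exact ⟨Set.mem_univ _, hs.1, hs.2.trans htT⟩
  have hγcont : ContinuousOn γ (Set.Icc 0 t) := by fun_prop
  have hcont : ContinuousOn (fun s => W (γ s)) (Set.Icc 0 t) :=
    hW.continuousOn.comp hγcont hmaps
  have hderiv : ∀ s ∈ Set.Ioo 0 t, HasDerivAt (fun s => W (γ s)) (G s) s := by
    intro s hs
    have hsT : s ∈ Set.Ioo 0 T := ⟨hs.1, lt_of_lt_of_le hs.2 htT⟩
    have hmem : Set.univ ×ˢ Set.Icc 0 T ∈ nhds (γ s) := by
      rw [mem_nhds_iff]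
      exact ⟨Set.univ ×ˢ Set.Ioo 0 T, Set.prod_mono_right Set.Ioo_subset_Icc_self,
        isOpen_univ.prod isOpen_Ioo, Set.mem_univ _, hsT⟩
    have hF : HasFDerivAt W (fderiv ℝ W (γ s)) (γ s) :=
      ((hW.contDiffAt hmem).differentiableAt one_ne_zero).hasFDerivAt
    have hγd : HasDerivAt γ (-c, 1) s := by
      have h1 : HasDerivAt (fun s : ℝ => x + c * (t - s)) (-c) s := by
        have := (((hasDerivAt_id s).const_sub t).const_mul c).const_add x
        rw [show -c = c * -1 by ring]; exact this
      exact h1.prodMk (hasDerivAt_id s)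
    have hcomp : HasDerivAt (fun s => W (γ s)) (fderiv ℝ W (γ s) (-c, 1)) s :=
      hF.comp_hasDerivAt s hγd
    have hFp : HasFDerivAt W (fderiv ℝ W (γ s)) (x + c * (t - s), s) := hF
    have hpx : HasDerivAt (fun y => W (y, s)) (fderiv ℝ W (γ s) (1, 0)) (x + c * (t - s)) := by
      have hcurve : HasDerivAt (fun y : ℝ => (y, s)) ((1 : ℝ), (0 : ℝ)) (x + c * (t - s)) :=
        (hasDerivAt_id _).prodMk (hasDerivAt_const _ _)
      exact hFp.comp_hasDerivAt (x + c * (t - s)) hcurve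
    have hpt : HasDerivAt (fun u => W (x + c * (t - s), u)) (fderiv ℝ W (γ s) (0, 1)) s := by
      have hcurve : HasDerivAt (fun u : ℝ => (x + c * (t - s), u)) ((0 : ℝ), (1 : ℝ)) s :=
        (hasDerivAt_const _ _).prodMk (hasDerivAt_id _)
      exact hFp.comp_hasDerivAt s hcurve
    have hval : fderiv ℝ W (γ s) (-c, 1)
        = -c * deriv (fun y => W (y, s)) (x + c * (t - s))
          + deriv (fun u => W (x + c * (t - s), u)) s := by
      rw [hpx.deriv, hpt.deriv]
      have : ((-c, 1) : ℝ × ℝ) = (-c) • ((1:ℝ), (0:ℝ)) + ((0:ℝ), (1:ℝ)) := by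
        simp [Prod.ext_iff]
      rw [this, map_add, ContinuousLinearMap.map_smul]
      simp [smul_eq_mul]
    rw [hval, heq s hs] at hcomp
    exact hcomp
  have hint : IntervalIntegrable G volume 0 t :=
    (hG.mono (by rw [Set.uIcc_of_le ht0])).intervalIntegrable
  have := intervalIntegral.integral_eq_sub_of_hasDeriv_right_of_le ht0 hcont
    (fun s hs => (hderiv s hs).hasDerivWithinAt) hint
  have h0' : γ 0 = (x + c * t, 0) := by simp [hγ]
  have ht' : γ t = (x, t) := by simp [hγ]
  rw [h0', ht'] at this
  linarith

lemma contOn_char (u : ℝ → ℝ → ℝ) (T : ℝ)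
    (h : ContDiffOn ℝ 1 (fun p : ℝ × ℝ => u p.1 p.2) (Set.univ ×ˢ Set.Icc 0 T))
    (g : ℝ → ℝ) (hg : Continuous g) (τ : ℝ) (hτT : τ ≤ T) :
    ContinuousOn (fun s => u (g s) s) (Set.Icc 0 τ) := by
  have : ContinuousOn ((fun p : ℝ × ℝ => u p.1 p.2) ∘ (fun s => (g s, s))) (Set.Icc 0 τ) :=
    h.continuousOn.comp (by fun_prop) (fun s hs => ⟨Set.mem_univ _, hs.1, hs.2.trans hτT⟩)
  exact this

lemma sol_char1_cont (N₀ : ℝ → ℝ) (T : ℝ) (w₁ w₂ : ℝ → ℝ → ℝ)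
    (hw : IsSolW N₀ T w₁ w₂)
    (hc : Continuous (fun p : ℝ × ℝ => Ncoef N₀ p.1 p.2 * p.2))
    (y τ : ℝ) (hT : τ ≤ T) :
    ContinuousOn
      (fun s => -(Ncoef N₀ (w₁ (y + τ - s) s) (w₂ (y + τ - s) s) * w₂ (y + τ - s) s))
      (Set.Icc 0 τ) := by
  have h1 := contOn_char w₁ T hw.1 (fun s => y + τ - s) (by fun_prop) τ hT
  have h2 := contOn_char w₂ T hw.2.1 (fun s => y + τ - s) (by fun_prop) τ hT
  exact ((hc.comp_continuousOn (h1.prodMk h2)).congr (fun s _ => rfl)).neg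

lemma sol_char2_cont (N₀ : ℝ → ℝ) (T : ℝ) (w₁ w₂ : ℝ → ℝ → ℝ)
    (hw : IsSolW N₀ T w₁ w₂)
    (hc : Continuous (fun p : ℝ × ℝ => Ncoef N₀ p.1 p.2 * p.1))
    (y τ : ℝ) (hT : τ ≤ T) :
    ContinuousOn
      (fun s => Ncoef N₀ (w₁ (y - τ + s) s) (w₂ (y - τ + s) s) * w₁ (y - τ + s) s)
      (Set.Icc 0 τ) := by
  have h1 := contOn_char w₁ T hw.1 (fun s => y - τ + s) (by fun_prop) τ hT
  have h2 := contOn_char w₂ T hw.2.1 (fun s => y - τ + s) (by fun_prop) τ hT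
  exact (hc.comp_continuousOn (h1.prodMk h2)).congr (fun s _ => rfl)

/-- Integral identity along the leftward characteristic for `w₁`. -/
lemma sol_char1 (N₀ : ℝ → ℝ) (T : ℝ) (w₁ w₂ : ℝ → ℝ → ℝ)
    (hw : IsSolW N₀ T w₁ w₂)
    (hc : Continuous (fun p : ℝ × ℝ => Ncoef N₀ p.1 p.2 * p.2))
    (y τ : ℝ) (h0 : 0 ≤ τ) (hT : τ ≤ T) :
    w₁ y τ = w₁ (y + τ) 0
      + ∫ s in (0:ℝ)..τ,
          -(Ncoef N₀ (w₁ (y + τ - s) s) (w₂ (y + τ - s) s) * w₂ (y + τ - s) s) := by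
  have hG : ContinuousOn
      (fun s => -(Ncoef N₀ (w₁ (y + τ - s) s) (w₂ (y + τ - s) s) * w₂ (y + τ - s) s))
      (Set.Icc 0 τ) := sol_char1_cont N₀ T w₁ w₂ hw hc y τ hT
  have heq : ∀ s ∈ Set.Ioo 0 τ,
      -(1:ℝ) * deriv (fun y' => (fun p : ℝ × ℝ => w₁ p.1 p.2) (y', s)) (y + 1 * (τ - s))
        + deriv (fun u => (fun p : ℝ × ℝ => w₁ p.1 p.2) (y + 1 * (τ - s), u)) s
      = -(Ncoef N₀ (w₁ (y + τ - s) s) (w₂ (y + τ - s) s) * w₂ (y + τ - s) s) := by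
    intro s hs
    have hys : y + 1 * (τ - s) = y + τ - s := by ring
    rw [hys]
    have h := (hw.2.2 (y + τ - s) s ⟨hs.1.le, hs.2.le.trans hT⟩).1
    simp only []
    rw [h]
    ring
  have := ftc_char (fun p : ℝ × ℝ => w₁ p.1 p.2) T hw.1 1 y τ h0 hT _ hG heq
  simpa using this

/-- Integral identity along the rightward characteristic for `w₂`. -/
lemma sol_char2 (N₀ : ℝ → ℝ) (T : ℝ) (w₁ w₂ : ℝ → ℝ → ℝ)
    (hw : IsSolW N₀ T w₁ w₂)
    (hc : Continuous (fun p : ℝ × ℝ => Ncoef N₀ p.1 p.2 * p.1))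
    (y τ : ℝ) (h0 : 0 ≤ τ) (hT : τ ≤ T) :
    w₂ y τ = w₂ (y - τ) 0
      + ∫ s in (0:ℝ)..τ,
          Ncoef N₀ (w₁ (y - τ + s) s) (w₂ (y - τ + s) s) * w₁ (y - τ + s) s := by
  have hG : ContinuousOn
      (fun s => Ncoef N₀ (w₁ (y - τ + s) s) (w₂ (y - τ + s) s) * w₁ (y - τ + s) s)
      (Set.Icc 0 τ) := sol_char2_cont N₀ T w₁ w₂ hw hc y τ hT
  have heq : ∀ s ∈ Set.Ioo 0 τ,
      -(-1:ℝ) * deriv (fun y' => (fun p : ℝ × ℝ => w₂ p.1 p.2) (y', s)) (y + (-1) * (τ - s))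
        + deriv (fun u => (fun p : ℝ × ℝ => w₂ p.1 p.2) (y + (-1) * (τ - s), u)) s
      = Ncoef N₀ (w₁ (y - τ + s) s) (w₂ (y - τ + s) s) * w₁ (y - τ + s) s := by
    intro s hs
    have hys : y + (-1) * (τ - s) = y - τ + s := by ring
    rw [hys]
    have h := (hw.2.2 (y - τ + s) s ⟨hs.1.le, hs.2.le.trans hT⟩).2
    simp only []
    rw [h]
    ring
  have := ftc_char (fun p : ℝ × ℝ => w₂ p.1 p.2) T hw.2.1 (-1) y τ h0 hT _ hG heq
  have hy : y + (-1) * τ = y - τ := by ring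
  rw [hy] at this
  exact this

lemma lip_cont (f : ℝ × ℝ → ℝ) (L : ℝ) (hL : 0 ≤ L)
    (h : ∀ p q : ℝ × ℝ, |f p - f q| ≤ L * Real.sqrt ((p.1 - q.1) ^ 2 + (p.2 - q.2) ^ 2)) :
    Continuous f := by
  have : LipschitzWith (2 * L).toNNReal f := by
    apply LipschitzWith.of_dist_le_mul
    intro p q
    rw [Real.dist_eq, Real.coe_toNNReal _ (by positivity)]
    calc |f p - f q| ≤ L * Real.sqrt ((p.1 - q.1) ^ 2 + (p.2 - q.2) ^ 2) := h p q
      _ ≤ L * (|p.1 - q.1| + |p.2 - q.2|) :=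
          mul_le_mul_of_nonneg_left (sqrt_sq_add_sq_le _ _) hL
      _ ≤ L * (dist p q + dist p q) := by
          apply mul_le_mul_of_nonneg_left _ hL
          have h1 : |p.1 - q.1| = dist p.1 q.1 := (Real.dist_eq _ _).symm
          have h2 : |p.2 - q.2| = dist p.2 q.2 := (Real.dist_eq _ _).symm
          rw [h1, h2, Prod.dist_eq]
          exact add_le_add (le_max_left _ _) (le_max_right _ _)
      _ = 2 * L * dist p q := by ring
  exact this.continuous

lemma int_step (K C : ℝ) (n : ℕ) (τ : ℝ) :
    ∫ s in (0:ℝ)..τ, 2 * C * (K * (2 * C * s) ^ n / (n.factorial : ℝ))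
      = K * (2 * C * τ) ^ (n + 1) / ((n + 1).factorial : ℝ) := by
  have h : ∀ s : ℝ, 2 * C * (K * (2 * C * s) ^ n / (n.factorial : ℝ))
      = (2 * C * K * (2 * C) ^ n / (n.factorial : ℝ)) * s ^ n := by
    intro s; rw [mul_pow]; ring
  simp only [h]
  rw [intervalIntegral.integral_const_mul, integral_pow]
  have hf : (((n + 1).factorial : ℝ)) = ((n : ℝ) + 1) * (n.factorial : ℝ) := by
    rw [Nat.factorial_succ]; push_cast; ring
  rw [hf, mul_pow]
  have h1 : ((n : ℝ) + 1) ≠ 0 := by positivity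
  have h2 : (n.factorial : ℝ) ≠ 0 := Nat.cast_ne_zero.mpr n.factorial_ne_zero
  rw [zero_pow (Nat.succ_ne_zero n)]
  field_simp
  ring


/-- domain-of-dependence uniqueness: if `z₁(u,v) = N(u,v)·u` and
`z₂(u,v) = N(u,v)·v` are globally Lipschitz on `ℝ²` (Euclidean norm), and two
classical solutions of system (W) agree at `t = 0` on `[a,b]`, then they agree
on the cone `{(x,t) : 0 ≤ t ≤ T, a + t ≤ x ≤ b − t}`. -/
theorem stmt10 (N₀ : ℝ → ℝ) (T : ℝ) (L : ℝ)
    (hz₁ : ∀ p q : ℝ × ℝ,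
      |Ncoef N₀ p.1 p.2 * p.1 - Ncoef N₀ q.1 q.2 * q.1|
        ≤ L * Real.sqrt ((p.1 - q.1) ^ 2 + (p.2 - q.2) ^ 2))
    (hz₂ : ∀ p q : ℝ × ℝ,
      |Ncoef N₀ p.1 p.2 * p.2 - Ncoef N₀ q.1 q.2 * q.2|
        ≤ L * Real.sqrt ((p.1 - q.1) ^ 2 + (p.2 - q.2) ^ 2))
    (w₁ w₂ v₁ v₂ : ℝ → ℝ → ℝ)
    (hw : IsSolW N₀ T w₁ w₂) (hv : IsSolW N₀ T v₁ v₂)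
    (a b : ℝ) (hab : a < b)
    (h0 : ∀ x ∈ Set.Icc a b, w₁ x 0 = v₁ x 0 ∧ w₂ x 0 = v₂ x 0) :
    ∀ t : ℝ, 0 ≤ t → t ≤ T → ∀ x : ℝ, a + t ≤ x → x ≤ b - t →
      w₁ x t = v₁ x t ∧ w₂ x t = v₂ x t := by
  intro t ht0 htT x hax hxb
  have hL0 : (0:ℝ) ≤ |L| := abs_nonneg L
  have hz₁' : ∀ p q : ℝ × ℝ,
      |Ncoef N₀ p.1 p.2 * p.1 - Ncoef N₀ q.1 q.2 * q.1|
        ≤ |L| * Real.sqrt ((p.1 - q.1) ^ 2 + (p.2 - q.2) ^ 2) :=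
    fun p q => (hz₁ p q).trans
      (mul_le_mul_of_nonneg_right (le_abs_self L) (Real.sqrt_nonneg _))
  have hz₂' : ∀ p q : ℝ × ℝ,
      |Ncoef N₀ p.1 p.2 * p.2 - Ncoef N₀ q.1 q.2 * q.2|
        ≤ |L| * Real.sqrt ((p.1 - q.1) ^ 2 + (p.2 - q.2) ^ 2) :=
    fun p q => (hz₂ p q).trans
      (mul_le_mul_of_nonneg_right (le_abs_self L) (Real.sqrt_nonneg _))
  have hc₁ : Continuous (fun p : ℝ × ℝ => Ncoef N₀ p.1 p.2 * p.1) :=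
    lip_cont _ _ hL0 hz₁'
  have hc₂ : Continuous (fun p : ℝ × ℝ => Ncoef N₀ p.1 p.2 * p.2) :=
    lip_cont _ _ hL0 hz₂'
  -- the cone and the bound K
  set cone : Set (ℝ × ℝ) :=
    {p | 0 ≤ p.2 ∧ p.2 ≤ T ∧ a + p.2 ≤ p.1 ∧ p.1 ≤ b - p.2} with hconedef
  have hxt : (x, t) ∈ cone := ⟨ht0, htT, hax, hxb⟩
  have hconecl : IsClosed cone := by
    have : cone = {p : ℝ × ℝ | 0 ≤ p.2} ∩ {p | p.2 ≤ T}
        ∩ {p | a + p.2 ≤ p.1} ∩ {p | p.1 ≤ b - p.2} := by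
      ext p
      simp only [hconedef, Set.mem_setOf_eq, Set.mem_inter_iff]
      tauto
    rw [this]
    exact (((isClosed_le continuous_const continuous_snd).inter
      (isClosed_le continuous_snd continuous_const)).inter
      (isClosed_le (by fun_prop) continuous_fst)).inter
      (isClosed_le continuous_fst (by fun_prop))
  have hconecpt : IsCompact cone := by
    apply (isCompact_Icc.prod isCompact_Icc
      : IsCompact ((Set.Icc a b) ×ˢ (Set.Icc 0 T))).of_isClosed_subset hconecl
    rintro ⟨y, τ⟩ ⟨h1, h2, h3, h4⟩
    exact ⟨⟨by linarith, by linarith⟩, h1, h2⟩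
  set D : ℝ × ℝ → ℝ :=
    fun p => |w₁ p.1 p.2 - v₁ p.1 p.2| + |w₂ p.1 p.2 - v₂ p.1 p.2| with hDdef
  have hconesub : cone ⊆ Set.univ ×ˢ Set.Icc 0 T := fun p hp => ⟨trivial, hp.1, hp.2.1⟩
  have hDcont : ContinuousOn D cone := by
    apply ContinuousOn.add
    · exact ((hw.1.continuousOn.mono hconesub).sub (hv.1.continuousOn.mono hconesub)).abs
    · exact ((hw.2.1.continuousOn.mono hconesub).sub (hv.2.1.continuousOn.mono hconesub)).abs
  obtain ⟨p₀, hp₀, hmax⟩ := hconecpt.exists_isMaxOn ⟨(x, t), hxt⟩ hDcont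
  set K : ℝ := D p₀ with hKdef
  have hKmax : ∀ p ∈ cone, D p ≤ K := fun p hp => hmax hp
  -- the key induction
  have key : ∀ n : ℕ, ∀ y τ : ℝ, 0 ≤ τ → τ ≤ T → a + τ ≤ y → y ≤ b - τ →
      |w₁ y τ - v₁ y τ| ≤ K * (2 * |L| * τ) ^ n / (n.factorial : ℝ) ∧
      |w₂ y τ - v₂ y τ| ≤ K * (2 * |L| * τ) ^ n / (n.factorial : ℝ) := by
    intro n
    induction n with
    | zero =>
      intro y τ hτ0 hτT hay hyb
      have hD := hKmax (y, τ) ⟨hτ0, hτT, hay, hyb⟩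
      simp only [pow_zero, Nat.factorial_zero, Nat.cast_one, mul_one, div_one]
      constructor
      · refine le_trans ?_ hD
        exact le_add_of_nonneg_right (abs_nonneg _)
      · refine le_trans ?_ hD
        exact le_add_of_nonneg_left (abs_nonneg _)
    | succ n ih =>
      intro y τ hτ0 hτT hay hyb
      -- the common pointwise bound along either characteristic
      have hqbound : ∀ (g : ℝ → ℝ), (∀ s ∈ Set.Icc 0 τ, 0 ≤ s ∧ s ≤ T ∧
            a + s ≤ g s ∧ g s ≤ b - s) → ∀ s ∈ Set.Icc (0:ℝ) τ,
          Real.sqrt ((w₁ (g s) s - v₁ (g s) s) ^ 2 + (w₂ (g s) s - v₂ (g s) s) ^ 2)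
            ≤ 2 * (K * (2 * |L| * s) ^ n / (n.factorial : ℝ)) := by
        intro g hg s hs
        obtain ⟨hs0, hsT, hgs1, hgs2⟩ := hg s hs
        obtain ⟨ha1, ha2⟩ := ih (g s) s hs0 hsT hgs1 hgs2
        calc Real.sqrt ((w₁ (g s) s - v₁ (g s) s) ^ 2 + (w₂ (g s) s - v₂ (g s) s) ^ 2)
            ≤ |w₁ (g s) s - v₁ (g s) s| + |w₂ (g s) s - v₂ (g s) s| :=
              sqrt_sq_add_sq_le _ _
          _ ≤ 2 * (K * (2 * |L| * s) ^ n / (n.factorial : ℝ)) := by linarith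
      constructor
      · -- d₁ bound, leftward characteristic
        have e_w := sol_char1 N₀ T w₁ w₂ hw hc₂ y τ hτ0 hτT
        have e_v := sol_char1 N₀ T v₁ v₂ hv hc₂ y τ hτ0 hτT
        have hinit : w₁ (y + τ) 0 = v₁ (y + τ) 0 :=
          (h0 (y + τ) ⟨by linarith, by linarith⟩).1
        have hGw := sol_char1_cont N₀ T w₁ w₂ hw hc₂ y τ hτT
        have hGv := sol_char1_cont N₀ T v₁ v₂ hv hc₂ y τ hτT
        have hIw : IntervalIntegrable
            (fun s => -(Ncoef N₀ (w₁ (y + τ - s) s) (w₂ (y + τ - s) s) * w₂ (y + τ - s) s))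
            volume 0 τ := by
          apply ContinuousOn.intervalIntegrable
          rw [Set.uIcc_of_le hτ0]; exact hGw
        have hIv : IntervalIntegrable
            (fun s => -(Ncoef N₀ (v₁ (y + τ - s) s) (v₂ (y + τ - s) s) * v₂ (y + τ - s) s))
            volume 0 τ := by
          apply ContinuousOn.intervalIntegrable
          rw [Set.uIcc_of_le hτ0]; exact hGv
        have hdiff : w₁ y τ - v₁ y τ = ∫ s in (0:ℝ)..τ,
            ((fun s => -(Ncoef N₀ (w₁ (y + τ - s) s) (w₂ (y + τ - s) s) * w₂ (y + τ - s) s)) s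
            - (fun s => -(Ncoef N₀ (v₁ (y + τ - s) s) (v₂ (y + τ - s) s) * v₂ (y + τ - s) s)) s) := by
          rw [intervalIntegral.integral_sub hIw hIv, e_w, e_v, hinit]
          ring
        have hpt : ∀ s ∈ Set.Icc (0:ℝ) τ,
            |((fun s => -(Ncoef N₀ (w₁ (y + τ - s) s) (w₂ (y + τ - s) s) * w₂ (y + τ - s) s)) s
            - (fun s => -(Ncoef N₀ (v₁ (y + τ - s) s) (v₂ (y + τ - s) s) * v₂ (y + τ - s) s)) s)|
            ≤ 2 * |L| * (K * (2 * |L| * s) ^ n / (n.factorial : ℝ)) := by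
          intro s hs
          have hz := hz₂' (w₁ (y + τ - s) s, w₂ (y + τ - s) s)
            (v₁ (y + τ - s) s, v₂ (y + τ - s) s)
          simp only at hz
          have hq := hqbound (fun s => y + τ - s)
            (fun s hs => ⟨hs.1, hs.2.trans hτT, by linarith [hs.1, hs.2],
              by linarith [hs.1, hs.2]⟩) s hs
          have habs : |(-(Ncoef N₀ (w₁ (y + τ - s) s) (w₂ (y + τ - s) s) * w₂ (y + τ - s) s))
              - (-(Ncoef N₀ (v₁ (y + τ - s) s) (v₂ (y + τ - s) s) * v₂ (y + τ - s) s))|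
              = |Ncoef N₀ (w₁ (y + τ - s) s) (w₂ (y + τ - s) s) * w₂ (y + τ - s) s
              - Ncoef N₀ (v₁ (y + τ - s) s) (v₂ (y + τ - s) s) * v₂ (y + τ - s) s| := by
            rw [← abs_neg]; congr 1; ring
          simp only [habs]
          calc |Ncoef N₀ (w₁ (y + τ - s) s) (w₂ (y + τ - s) s) * w₂ (y + τ - s) s
              - Ncoef N₀ (v₁ (y + τ - s) s) (v₂ (y + τ - s) s) * v₂ (y + τ - s) s|
              ≤ |L| * Real.sqrt ((w₁ (y + τ - s) s - v₁ (y + τ - s) s) ^ 2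
                + (w₂ (y + τ - s) s - v₂ (y + τ - s) s) ^ 2) := hz
            _ ≤ |L| * (2 * (K * (2 * |L| * s) ^ n / (n.factorial : ℝ))) :=
                mul_le_mul_of_nonneg_left hq hL0
            _ = 2 * |L| * (K * (2 * |L| * s) ^ n / (n.factorial : ℝ)) := by ring
        calc |w₁ y τ - v₁ y τ|
            ≤ ∫ s in (0:ℝ)..τ, |((fun s => -(Ncoef N₀ (w₁ (y + τ - s) s) (w₂ (y + τ - s) s) * w₂ (y + τ - s) s)) s
            - (fun s => -(Ncoef N₀ (v₁ (y + τ - s) s) (v₂ (y + τ - s) s) * v₂ (y + τ - s) s)) s)| := by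
              rw [hdiff]
              exact intervalIntegral.abs_integral_le_integral_abs hτ0
          _ ≤ ∫ s in (0:ℝ)..τ, 2 * |L| * (K * (2 * |L| * s) ^ n / (n.factorial : ℝ)) := by
              apply intervalIntegral.integral_mono_on hτ0 ((hIw.sub hIv).abs) _ hpt
              apply Continuous.intervalIntegrable
              fun_prop
          _ = K * (2 * |L| * τ) ^ (n + 1) / ((n + 1).factorial : ℝ) := int_step K |L| n τ
      · -- d₂ bound, rightward characteristic
        have e_w := sol_char2 N₀ T w₁ w₂ hw hc₁ y τ hτ0 hτT
        have e_v := sol_char2 N₀ T v₁ v₂ hv hc₁ y τ hτ0 hτT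
        have hinit : w₂ (y - τ) 0 = v₂ (y - τ) 0 :=
          (h0 (y - τ) ⟨by linarith, by linarith⟩).2
        have hGw := sol_char2_cont N₀ T w₁ w₂ hw hc₁ y τ hτT
        have hGv := sol_char2_cont N₀ T v₁ v₂ hv hc₁ y τ hτT
        have hIw : IntervalIntegrable
            (fun s => Ncoef N₀ (w₁ (y - τ + s) s) (w₂ (y - τ + s) s) * w₁ (y - τ + s) s)
            volume 0 τ := by
          apply ContinuousOn.intervalIntegrable
          rw [Set.uIcc_of_le hτ0]; exact hGw
        have hIv : IntervalIntegrable
            (fun s => Ncoef N₀ (v₁ (y - τ + s) s) (v₂ (y - τ + s) s) * v₁ (y - τ + s) s)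
            volume 0 τ := by
          apply ContinuousOn.intervalIntegrable
          rw [Set.uIcc_of_le hτ0]; exact hGv
        have hdiff : w₂ y τ - v₂ y τ = ∫ s in (0:ℝ)..τ,
            ((fun s => Ncoef N₀ (w₁ (y - τ + s) s) (w₂ (y - τ + s) s) * w₁ (y - τ + s) s) s
            - (fun s => Ncoef N₀ (v₁ (y - τ + s) s) (v₂ (y - τ + s) s) * v₁ (y - τ + s) s) s) := by
          rw [intervalIntegral.integral_sub hIw hIv, e_w, e_v, hinit]
          ring
        have hpt : ∀ s ∈ Set.Icc (0:ℝ) τ,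
            |((fun s => Ncoef N₀ (w₁ (y - τ + s) s) (w₂ (y - τ + s) s) * w₁ (y - τ + s) s) s
            - (fun s => Ncoef N₀ (v₁ (y - τ + s) s) (v₂ (y - τ + s) s) * v₁ (y - τ + s) s) s)|
            ≤ 2 * |L| * (K * (2 * |L| * s) ^ n / (n.factorial : ℝ)) := by
          intro s hs
          have hz := hz₁' (w₁ (y - τ + s) s, w₂ (y - τ + s) s)
            (v₁ (y - τ + s) s, v₂ (y - τ + s) s)
          simp only at hz
          have hq := hqbound (fun s => y - τ + s)
            (fun s hs => ⟨hs.1, hs.2.trans hτT, by linarith [hs.1, hs.2],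
              by linarith [hs.1, hs.2]⟩) s hs
          calc |Ncoef N₀ (w₁ (y - τ + s) s) (w₂ (y - τ + s) s) * w₁ (y - τ + s) s
              - Ncoef N₀ (v₁ (y - τ + s) s) (v₂ (y - τ + s) s) * v₁ (y - τ + s) s|
              ≤ |L| * Real.sqrt ((w₁ (y - τ + s) s - v₁ (y - τ + s) s) ^ 2
                + (w₂ (y - τ + s) s - v₂ (y - τ + s) s) ^ 2) := hz
            _ ≤ |L| * (2 * (K * (2 * |L| * s) ^ n / (n.factorial : ℝ))) :=
                mul_le_mul_of_nonneg_left hq hL0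
            _ = 2 * |L| * (K * (2 * |L| * s) ^ n / (n.factorial : ℝ)) := by ring
        calc |w₂ y τ - v₂ y τ|
            ≤ ∫ s in (0:ℝ)..τ, |((fun s => Ncoef N₀ (w₁ (y - τ + s) s) (w₂ (y - τ + s) s) * w₁ (y - τ + s) s) s
            - (fun s => Ncoef N₀ (v₁ (y - τ + s) s) (v₂ (y - τ + s) s) * v₁ (y - τ + s) s) s)| := by
              rw [hdiff]
              exact intervalIntegral.abs_integral_le_integral_abs hτ0
          _ ≤ ∫ s in (0:ℝ)..τ, 2 * |L| * (K * (2 * |L| * s) ^ n / (n.factorial : ℝ)) := by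
              apply intervalIntegral.integral_mono_on hτ0 ((hIw.sub hIv).abs) _ hpt
              apply Continuous.intervalIntegrable
              fun_prop
          _ = K * (2 * |L| * τ) ^ (n + 1) / ((n + 1).factorial : ℝ) := int_step K |L| n τ
  -- pass to the limit
  have hlim : Tendsto (fun n : ℕ => K * (2 * |L| * t) ^ n / (n.factorial : ℝ))
      atTop (nhds 0) := by
    have h := FloorSemiring.tendsto_pow_div_factorial_atTop (K := ℝ) (2 * |L| * t)
    have h2 := h.const_mul K
    simpa [mul_div_assoc] using h2
  have h₁ : |w₁ x t - v₁ x t| ≤ 0 :=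
    ge_of_tendsto hlim (Filter.Eventually.of_forall fun n => (key n x t ht0 htT hax hxb).1)
  have h₂ : |w₂ x t - v₂ x t| ≤ 0 :=
    ge_of_tendsto hlim (Filter.Eventually.of_forall fun n => (key n x t ht0 htT hax hxb).2)
  exact ⟨sub_eq_zero.mp (abs_nonpos_iff.mp h₁), sub_eq_zero.mp (abs_nonpos_iff.mp h₂)⟩
end
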